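/- Let V be a finite-dimensional real vector space and k ≥ 1. The derivation map d : C^{k+1}₀([a,b],V*) → C^k₀([a,b],V*), α ↦ α', is an injective bounded linear map with closed image. Consequently its transpose d* : D^k([a,b],V) → D^{k+1}([a,b],V) is surjective; equivalently, every generalized function f ∈ D^{k+1}([a,b],V) admits a primitive F ∈ D^k([a,b],V) with F' = f. -/

import Mathlib

open Set MeasureTheory intervalIntegral Filter Topology
open scoped ContDiff

/-- `α` belongs to `C^k₀([a,b],E)`: it is `C^k` and its derivatives of order `≤ k`
vanish at `a` and `b`. -/
def MemCk0 (k : ℕ) (a b : ℝ) {E : Type*} [NormedAddCommGroup E] [NormedSpace ℝ E]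
    (α : ℝ → E) : Prop :=
  ContDiff ℝ k α ∧ ∀ j ≤ k, iteratedDeriv j α a = 0 ∧ iteratedDeriv j α b = 0

/-- The `C^k` norm of `α` on `[a,b]` is bounded by `K`. -/
def CkNormLe (k : ℕ) (a b : ℝ) {E : Type*} [NormedAddCommGroup E] [NormedSpace ℝ E]
    (α : ℝ → E) (K : ℝ) : Prop :=
  ∀ j ≤ k, ∀ t ∈ Set.Icc a b, ‖iteratedDeriv j α t‖ ≤ K

/-- `f` represents an element of `D^k([a,b],V)`, the continuous dual of
`C^k₀([a,b],V*)`. -/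
structure IsDk (k : ℕ) (a b : ℝ) {V : Type*} [NormedAddCommGroup V] [NormedSpace ℝ V]
    (f : (ℝ → (V →L[ℝ] ℝ)) → ℝ) : Prop where
  map_add : ∀ α β, MemCk0 k a b α → MemCk0 k a b β → f (α + β) = f α + f β
  map_smul : ∀ (c : ℝ) (α), MemCk0 k a b α → f (c • α) = c * f α
  bound : ∃ C : ℝ, ∀ α K, MemCk0 k a b α → CkNormLe k a b α K → |f α| ≤ C * K

set_option maxHeartbeats 2000000

section Aux

variable {E : Type*} [NormedAddCommGroup E] [NormedSpace ℝ E]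

lemma aux_iteratedDeriv_zero_fun (n : ℕ) :
    iteratedDeriv n (fun _ : ℝ => (0 : E)) = fun _ => 0 := by
  induction n with
  | zero => simp [iteratedDeriv_zero]
  | succ n ih =>
      rw [iteratedDeriv_succ', show deriv (fun _ : ℝ => (0 : E)) = fun _ => (0 : E) from
        funext fun x => by simp, ih]

lemma aux_iteratedDeriv_smul_const {φ : ℝ → ℝ} (hφ : ContDiff ℝ ∞ φ) (I : E)
    (j : ℕ) : iteratedDeriv j (fun t => φ t • I) = fun t => iteratedDeriv j φ t • I := by
  induction j generalizing φ with
  | zero => simp [iteratedDeriv_zero]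
  | succ n ih =>
      rw [iteratedDeriv_succ', iteratedDeriv_succ',
        show deriv (fun t => φ t • I) = fun t => deriv φ t • I from
          funext fun t => deriv_smul_const ((hφ.differentiable (by simp)) t) I,
        ih (contDiff_infty_iff_deriv.mp hφ).2]

lemma aux_iteratedDeriv_sub {f g : ℝ → E} {n : ℕ} (hf : ContDiff ℝ n f) (hg : ContDiff ℝ n g)
    (x : ℝ) :
    iteratedDeriv n (fun t => f t - g t) x = iteratedDeriv n f x - iteratedDeriv n g x := by
  have := iteratedDerivWithin_sub (mem_univ x) uniqueDiffOn_univ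
    hf.contDiffWithinAt hg.contDiffWithinAt
  simp only [iteratedDerivWithin_univ] at this
  exact this

lemma aux_exists_iter_bound {g : ℝ → E} (hg : ContDiff ℝ ∞ g) (a b : ℝ) (m : ℕ) :
    ∃ M : ℝ, 0 ≤ M ∧ ∀ j ≤ m, ∀ t ∈ Icc a b, ‖iteratedDeriv j g t‖ ≤ M := by
  induction m with
  | zero =>
      obtain ⟨M, hM⟩ := isCompact_Icc.exists_bound_of_continuousOn
        ((hg.continuous_iteratedDeriv 0 (by exact_mod_cast le_top)).continuousOn (s := Icc a b))
      refine ⟨max M 0, le_max_right _ _, fun j hj t ht => ?_⟩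
      interval_cases j
      exact le_trans (hM t ht) (le_max_left _ _)
  | succ m ih =>
      obtain ⟨M, hM0, hM⟩ := ih
      obtain ⟨M', hM'⟩ := isCompact_Icc.exists_bound_of_continuousOn
        ((hg.continuous_iteratedDeriv (m + 1) (by exact_mod_cast le_top)).continuousOn (s := Icc a b))
      refine ⟨max M M', le_trans hM0 (le_max_left _ _), fun j hj t ht => ?_⟩
      rcases Nat.lt_or_ge j (m + 1) with h | h
      · exact le_trans (hM j (by omega) t ht) (le_max_left _ _)
      · have : j = m + 1 := by omega
        subst this
        exact le_trans (hM' t ht) (le_max_right _ _)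

variable [CompleteSpace E]

lemma aux_primitive_deriv {g : ℝ → E} (hg : Continuous g) (a : ℝ) :
    deriv (fun t => ∫ s in a..t, g s) = g :=
  funext fun t => hg.deriv_integral g a t |>.trans rfl

lemma aux_primitive_contDiff {k : ℕ} {g : ℝ → E} (hg : ContDiff ℝ k g) (a : ℝ) :
    ContDiff ℝ (k + 1 : ℕ) (fun t => ∫ s in a..t, g s) := by
  have hc : Continuous g := hg.continuous
  have hdiff : Differentiable ℝ (fun t => ∫ s in a..t, g s) := fun t =>
    ((hc.integral_hasStrictDerivAt a t).hasDerivAt).differentiableAt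
  rw [show ((k + 1 : ℕ) : WithTop ℕ∞) = (k : WithTop ℕ∞) + 1 by push_cast; ring]
  refine contDiff_succ_iff_deriv.2 ⟨hdiff, ?_, ?_⟩
  · intro h
    simp at h
  · rw [aux_primitive_deriv hc a]
    exact hg

end Aux

/-- the derivation map `d : C^{k+1}₀([a,b],V*) → C^k₀([a,b],V*)`,
`α ↦ α'`, is an injective bounded linear map with closed image (expressed by a two-sided
norm estimate); consequently its transpose `d* : D^k → D^{k+1}` is surjective, i.e. every
`f ∈ D^{k+1}([a,b],V)` admits a primitive `F ∈ D^k([a,b],V)` with `F' = f`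
(`⟨F, α'⟩ = −⟨f, α⟩` for all `α ∈ C^{k+1}₀`). -/
theorem derivation_injective_closed_image_transpose_surjective
    (V : Type*) [NormedAddCommGroup V] [NormedSpace ℝ V] [FiniteDimensional ℝ V]
    (a b : ℝ) (hab : a < b) (k : ℕ) (hk : 1 ≤ k) :
    (∀ α : ℝ → (V →L[ℝ] ℝ), MemCk0 (k + 1) a b α →
        (∀ t ∈ Set.Icc a b, deriv α t = 0) → ∀ t ∈ Set.Icc a b, α t = 0) ∧
      (∃ c : ℝ, ∀ (α : ℝ → (V →L[ℝ] ℝ)) (K : ℝ), MemCk0 (k + 1) a b α →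
        CkNormLe (k + 1) a b α K → CkNormLe k a b (deriv α) (c * K)) ∧
      (∃ c : ℝ, 0 < c ∧ ∀ (α : ℝ → (V →L[ℝ] ℝ)) (K : ℝ), MemCk0 (k + 1) a b α →
        CkNormLe k a b (deriv α) K → CkNormLe (k + 1) a b α (c * K)) ∧
      (∀ f : (ℝ → (V →L[ℝ] ℝ)) → ℝ, IsDk (k + 1) a b f →
        ∃ F : (ℝ → (V →L[ℝ] ℝ)) → ℝ, IsDk k a b F ∧
          ∀ α, MemCk0 (k + 1) a b α → F (deriv α) = - f α) := by
  have hone : ((k + 1 : ℕ) : WithTop ℕ∞) ≠ 0 := by exact_mod_cast Nat.succ_ne_zero k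
  refine ⟨?_, ⟨1, ?_⟩, ⟨1 + (b - a), by linarith, ?_⟩, ?_⟩
  · -- injectivity
    intro α hα hd t ht
    have hdiff : Differentiable ℝ α := hα.1.differentiable hone
    have h0 : α a = 0 := by simpa [iteratedDeriv_zero] using (hα.2 0 (Nat.zero_le _)).1
    have hb := norm_image_sub_le_of_norm_deriv_le_segment' (f := α) (f' := deriv α) (C := 0)
      (fun x _ => (hdiff x).hasDerivAt.hasDerivWithinAt)
      (fun x hx => by rw [hd x (Ico_subset_Icc_self hx)]; simp) t ht
    have : ‖α t - α a‖ ≤ 0 := by simpa using hb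
    have := norm_le_zero_iff.1 (le_trans this le_rfl)
    rw [h0, sub_zero] at this
    exact this
  · -- boundedness of d
    intro α K hα hK j hj t ht
    rw [one_mul, ← iteratedDeriv_succ']
    exact hK (j + 1) (by omega) t ht
  · -- closed image estimate
    intro α K hα hK j hj t ht
    have hK0 : 0 ≤ K :=
      le_trans (norm_nonneg _) (hK 0 (Nat.zero_le _) a ⟨le_refl a, hab.le⟩)
    match j, hj with
    | 0, _ =>
      have hdiff : Differentiable ℝ α := hα.1.differentiable hone
      have h0 : α a = 0 := by simpa [iteratedDeriv_zero] using (hα.2 0 (Nat.zero_le _)).1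
      have hb := norm_image_sub_le_of_norm_deriv_le_segment' (f := α) (f' := deriv α) (C := K)
        (fun x _ => (hdiff x).hasDerivAt.hasDerivWithinAt)
        (fun x hx => by
          simpa [iteratedDeriv_zero] using hK 0 (Nat.zero_le _) x (Ico_subset_Icc_self hx))
        t ht
      have h1 : ‖α t‖ ≤ K * (t - a) := by simpa [h0] using hb
      have h2 : t - a ≤ b - a := by have := ht.2; linarith
      calc ‖iteratedDeriv 0 α t‖ = ‖α t‖ := by rw [iteratedDeriv_zero]
        _ ≤ K * (t - a) := h1
        _ ≤ (1 + (b - a)) * K := by nlinarith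
    | (j + 1), hj =>
      rw [iteratedDeriv_succ']
      calc ‖iteratedDeriv j (deriv α) t‖ ≤ K := hK j (by omega) t ht
        _ ≤ (1 + (b - a)) * K := by nlinarith
  · -- surjectivity of the transpose
    intro f hf
    obtain ⟨C, hC⟩ := hf.bound
    -- the normalized bump function φ
    set c₀ : ℝ := (a + b) / 2 with hc₀
    have h1 : (0 : ℝ) < (b - a) / 8 := by linarith
    have h2 : (b - a) / 8 < (b - a) / 4 := by linarith
    let bump : ContDiffBump c₀ := ⟨(b - a) / 8, (b - a) / 4, h1, h2⟩
    set J : ℝ := ∫ x, bump x with hJdef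
    have hJ : 0 < J := bump.integral_pos
    set φ : ℝ → ℝ := fun t => J⁻¹ • bump t with hφdef
    have hφsmooth : ContDiff ℝ ∞ φ := (bump.contDiff (n := (⊤ : ℕ∞))).const_smul J⁻¹
    have hsupp : Function.support φ ⊆ Ioo (a + (b - a) / 4) (b - (b - a) / 4) := by
      intro x hx
      have hx' : x ∈ Function.support bump := by
        intro hx0
        apply hx
        simp [hφdef, hx0]
      rw [bump.support_eq, Real.ball_eq_Ioo] at hx'
      have e1 : c₀ - (b - a) / 4 = a + (b - a) / 4 := by rw [hc₀]; ring
      have e2 : c₀ + (b - a) / 4 = b - (b - a) / 4 := by rw [hc₀]; ring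
      rwa [e1, e2] at hx'
    have hφint : (∫ s in a..b, φ s) = 1 := by
      have hss : Function.support φ ⊆ Ioc a b := fun x hx => by
        have := hsupp hx
        constructor <;> [linarith [this.1]; linarith [this.2]]
      rw [intervalIntegral.integral_eq_integral_of_support_subset hss]
      rw [hφdef]
      rw [MeasureTheory.integral_smul]
      rw [← hJdef]
      simp [smul_eq_mul, inv_mul_cancel₀ hJ.ne']
    have hφa : ∀ j : ℕ, iteratedDeriv j φ a = 0 := by
      intro j
      have hev : φ =ᶠ[𝓝 a] (fun _ => (0 : ℝ)) := by
        filter_upwards [Iio_mem_nhds (show a < a + (b - a) / 4 by linarith)] with x hx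
        by_contra hne
        have := hsupp (by simpa [Function.mem_support] using hne)
        exact absurd this.1 (not_lt.2 hx.le)
      rw [hev.iteratedDeriv_eq, aux_iteratedDeriv_zero_fun]
    have hφb : ∀ j : ℕ, iteratedDeriv j φ b = 0 := by
      intro j
      have hev : φ =ᶠ[𝓝 b] (fun _ => (0 : ℝ)) := by
        filter_upwards [Ioi_mem_nhds (show b - (b - a) / 4 < b by linarith)] with x hx
        by_contra hne
        have := hsupp (by simpa [Function.mem_support] using hne)
        exact absurd this.2 (not_lt.2 hx.le)
      rw [hev.iteratedDeriv_eq, aux_iteratedDeriv_zero_fun]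
    obtain ⟨Mφ, hMφ0, hMφ⟩ := aux_exists_iter_bound hφsmooth a b k
    -- the primitive operator P
    set P : (ℝ → V →L[ℝ] ℝ) → (ℝ → V →L[ℝ] ℝ) :=
      fun β => fun t => ∫ s in a..t, (β s - φ s • (∫ u in a..b, β u)) with hPdef
    set c₁ : ℝ := (1 + (b - a)) * (1 + Mφ * (b - a)) with hc₁
    -- key properties of P on C^k₀
    have key : ∀ β : ℝ → V →L[ℝ] ℝ, MemCk0 k a b β →
        MemCk0 (k + 1) a b (P β) ∧
          ∀ K, CkNormLe k a b β K → CkNormLe (k + 1) a b (P β) (c₁ * K) := by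
      intro β hβ
      set I : V →L[ℝ] ℝ := ∫ u in a..b, β u with hI
      set g : ℝ → (V →L[ℝ] ℝ) := fun s => β s - φ s • I with hg
      have hβc : Continuous β := hβ.1.continuous
      have hgc : ContDiff ℝ k g :=
        hβ.1.sub (((hφsmooth.of_le (show ((k : ℕ) : WithTop ℕ∞) ≤ ∞ by exact_mod_cast le_top)).smul contDiff_const))
      have hPc : ContDiff ℝ (k + 1 : ℕ) (P β) := aux_primitive_contDiff hgc a
      have hPd : deriv (P β) = g := aux_primitive_deriv hgc.continuous a
      have hgiter : ∀ j ≤ k, ∀ x : ℝ,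
          iteratedDeriv j g x = iteratedDeriv j β x - iteratedDeriv j φ x • I := by
        intro j hj x
        have h1 : iteratedDeriv j g x =
            iteratedDeriv j β x - iteratedDeriv j (fun t => φ t • I) x :=
          aux_iteratedDeriv_sub
            (hβ.1.of_le (show ((j : ℕ) : WithTop ℕ∞) ≤ ((k : ℕ) : WithTop ℕ∞) by
              exact_mod_cast hj))
            (((hφsmooth.of_le (show ((k : ℕ) : WithTop ℕ∞) ≤ ∞ by exact_mod_cast le_top)).smul contDiff_const).of_le
              (show ((j : ℕ) : WithTop ℕ∞) ≤ ((k : ℕ) : WithTop ℕ∞) by exact_mod_cast hj)) x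
        rw [h1, aux_iteratedDeriv_smul_const hφsmooth I j]
      have hmem : MemCk0 (k + 1) a b (P β) := by
        refine ⟨hPc, fun j hj => ?_⟩
        match j, hj with
        | 0, _ =>
          constructor
          · simp [hPdef, iteratedDeriv_zero]
          · have : P β b = I - (∫ s in a..b, φ s) • I := by
              rw [hPdef]
              simp only
              rw [intervalIntegral.integral_sub (f := β) (g := fun s => φ s • ∫ u in a..b, β u) (hβc.intervalIntegrable a b)
                ((hφsmooth.continuous.smul continuous_const).intervalIntegrable a b),
                intervalIntegral.integral_smul_const, hI]
            rw [iteratedDeriv_zero, this, hφint, one_smul, sub_self]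
        | (j + 1), hj =>
          have hrw : iteratedDeriv (j + 1) (P β) = iteratedDeriv j g := by
            rw [iteratedDeriv_succ', hPd]
          constructor
          · rw [hrw, hgiter j (by omega) a, (hβ.2 j (by omega)).1, hφa j, zero_smul, sub_zero]
          · rw [hrw, hgiter j (by omega) b, (hβ.2 j (by omega)).2, hφb j, zero_smul, sub_zero]
      refine ⟨hmem, ?_⟩
      intro K hK j hj t ht
      have hK0 : 0 ≤ K :=
        le_trans (norm_nonneg _) (hK 0 (Nat.zero_le _) a ⟨le_refl a, hab.le⟩)
      have hInorm : ‖I‖ ≤ K * (b - a) := by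
        have := intervalIntegral.norm_integral_le_of_norm_le_const (C := K) (f := β)
          (a := a) (b := b) (fun x hx => by
            rw [uIoc_of_le hab.le] at hx
            simpa [iteratedDeriv_zero] using
              hK 0 (Nat.zero_le _) x ⟨hx.1.le, hx.2⟩)
        rw [hI]
        calc ‖∫ u in a..b, β u‖ ≤ K * |b - a| := this
          _ = K * (b - a) := by rw [abs_of_nonneg (by linarith)]
      have hgbound : ∀ j ≤ k, ∀ x ∈ Icc a b, ‖iteratedDeriv j g x‖ ≤ K + Mφ * (K * (b - a)) := by
        intro j hj x hx
        rw [hgiter j hj x]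
        calc ‖iteratedDeriv j β x - iteratedDeriv j φ x • I‖
            ≤ ‖iteratedDeriv j β x‖ + ‖iteratedDeriv j φ x • I‖ := norm_sub_le _ _
          _ ≤ K + Mφ * (K * (b - a)) := by
              refine add_le_add (hK j hj x hx) ?_
              exact le_trans (ContinuousLinearMap.opNorm_smul_le _ _)
                (mul_le_mul (hMφ j hj x hx) hInorm (norm_nonneg _) hMφ0)
      match j, hj with
      | 0, _ =>
        rw [iteratedDeriv_zero]
        have hb := intervalIntegral.norm_integral_le_of_norm_le_const
          (C := K + Mφ * (K * (b - a))) (f := g) (a := a) (b := t) (fun x hx => by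
            rw [uIoc_of_le ht.1] at hx
            exact hgbound 0 (Nat.zero_le _) x ⟨hx.1.le, le_trans hx.2 ht.2⟩)
        calc ‖P β t‖ ≤ (K + Mφ * (K * (b - a))) * |t - a| := hb
          _ ≤ (K + Mφ * (K * (b - a))) * (b - a) := by
              have h3 : |t - a| ≤ b - a := by
                rw [abs_of_nonneg (by linarith [ht.1])]
                linarith [ht.2]
              have h4 : 0 ≤ K + Mφ * (K * (b - a)) := by
                have := mul_nonneg hMφ0 (mul_nonneg hK0 (by linarith : (0:ℝ) ≤ b - a))
                linarith
              exact mul_le_mul_of_nonneg_left h3 h4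
          _ ≤ c₁ * K := by
              rw [hc₁]
              nlinarith [mul_nonneg hMφ0 hK0, hab, hK0,
                mul_nonneg (mul_nonneg hMφ0 hK0) (show (0:ℝ) ≤ b - a by linarith)]
      | (j + 1), hj =>
        have hrw : iteratedDeriv (j + 1) (P β) = iteratedDeriv j g := by
          rw [iteratedDeriv_succ', hPd]
        rw [hrw]
        calc ‖iteratedDeriv j g t‖ ≤ K + Mφ * (K * (b - a)) :=
              hgbound j (by omega) t ht
          _ ≤ c₁ * K := by
              rw [hc₁]
              nlinarith [mul_nonneg hMφ0 hK0, hab, hK0,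
                mul_nonneg (mul_nonneg hMφ0 hK0) (show (0:ℝ) ≤ b - a by linarith)]
    -- linearity of P
    have hPadd : ∀ β γ : ℝ → V →L[ℝ] ℝ, Continuous β → Continuous γ → P (β + γ) = P β + P γ := by
      intro β γ hβ hγ
      funext t
      have hIadd : (∫ u in a..b, (β + γ) u) = (∫ u in a..b, β u) + ∫ u in a..b, γ u := by
        simpa using intervalIntegral.integral_add (hβ.intervalIntegrable a b)
          (hγ.intervalIntegrable a b)
      have heq : ∀ s : ℝ, (β + γ) s - φ s • (∫ u in a..b, (β + γ) u) =
          (β s - φ s • (∫ u in a..b, β u)) + (γ s - φ s • (∫ u in a..b, γ u)) := by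
        intro s
        rw [hIadd]
        simp only [Pi.add_apply, smul_add]
        abel
      show (∫ s in a..t, ((β + γ) s - φ s • (∫ u in a..b, (β + γ) u))) = _
      rw [show (fun s => (β + γ) s - φ s • (∫ u in a..b, (β + γ) u)) =
          (fun s => (β s - φ s • (∫ u in a..b, β u)) + (γ s - φ s • (∫ u in a..b, γ u)))
          from funext heq]
      rw [intervalIntegral.integral_add (f := fun s => β s - φ s • (∫ u in a..b, β u))
          (g := fun s => γ s - φ s • (∫ u in a..b, γ u))
        ((hβ.sub (hφsmooth.continuous.smul continuous_const)).intervalIntegrable a t)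
        ((hγ.sub (hφsmooth.continuous.smul continuous_const)).intervalIntegrable a t)]
      rfl
    have hPsmul : ∀ (c : ℝ) (β : ℝ → V →L[ℝ] ℝ), Continuous β → P (c • β) = c • P β := by
      intro c β hβ
      funext t
      have hIsm : (∫ u in a..b, (c • β) u) = c • ∫ u in a..b, β u := by
        simpa using intervalIntegral.integral_smul c β
      have heq : ∀ s : ℝ, (c • β) s - φ s • (∫ u in a..b, (c • β) u) =
          c • (β s - φ s • (∫ u in a..b, β u)) := by
        intro s
        rw [hIsm]
        simp only [Pi.smul_apply, smul_sub, smul_comm (φ s) c]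
      show (∫ s in a..t, ((c • β) s - φ s • (∫ u in a..b, (c • β) u))) = _
      rw [show (fun s => (c • β) s - φ s • (∫ u in a..b, (c • β) u)) =
          (fun s => c • (β s - φ s • (∫ u in a..b, β u))) from funext heq]
      rw [intervalIntegral.integral_smul]
      rfl
    -- the primitive functional F
    refine ⟨fun β => - f (P β), ⟨?_, ?_, ?_⟩, ?_⟩
    · intro β γ hβ hγ
      rw [hPadd β γ hβ.1.continuous hγ.1.continuous,
        hf.map_add (P β) (P γ) (key β hβ).1 (key γ hγ).1]
      ring
    · intro c β hβ
      rw [hPsmul c β hβ.1.continuous, hf.map_smul c (P β) (key β hβ).1]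
      ring
    · refine ⟨C * c₁, fun β K hβ hK => ?_⟩
      have := hC (P β) (c₁ * K) (key β hβ).1 ((key β hβ).2 K hK)
      calc |(- f (P β))| = |f (P β)| := abs_neg _
        _ ≤ C * (c₁ * K) := this
        _ = C * c₁ * K := by ring
    · intro α hα
      have hdiff : Differentiable ℝ α := hα.1.differentiable hone
      have hderc : Continuous (deriv α) := by
        have := hα.1.continuous_iteratedDeriv 1 (by exact_mod_cast by omega)
        rwa [iteratedDeriv_one] at this
      have hftc : ∀ t : ℝ, (∫ s in a..t, deriv α s) = α t - α a := by
        intro t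
        exact intervalIntegral.integral_deriv_eq_sub (fun x _ => (hdiff x))
          (hderc.intervalIntegrable a t)
      have h0a : α a = 0 := by simpa [iteratedDeriv_zero] using (hα.2 0 (Nat.zero_le _)).1
      have h0b : α b = 0 := by simpa [iteratedDeriv_zero] using (hα.2 0 (Nat.zero_le _)).2
      have hI0 : (∫ u in a..b, deriv α u) = 0 := by rw [hftc b, h0a, h0b, sub_zero]
      have hPα : P (deriv α) = α := by
        funext t
        show (∫ s in a..t, (deriv α s - φ s • (∫ u in a..b, deriv α u))) = α t
        rw [show (fun s => deriv α s - φ s • (∫ u in a..b, deriv α u)) = deriv α from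
          funext fun s => by rw [hI0, smul_zero, sub_zero]]
        rw [hftc t, h0a, sub_zero]
      show - f (P (deriv α)) = - f α
      rw [hPα]
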